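/- arXiv:1605.00229 — 2 statements merged into one kernel-verified Lean document; each statement's English description precedes it below -/
import Mathlib

section
/- Let U be a gl_m-module. Define an action of H_N on (C^m)^{⊗N} ⊗ U by letting S_N permute the N tensor factors C^m and letting z_p act as Ω_p = Σ_{a,b=1}^m E_{ab}^{(p)} ⊗ E_{ba}, where E_{ab}^{(p)} acts by E_{ab} in the p-th tensor factor and E_{ba} acts on U. Then the operators Ω_p satisfy [Ω_p, Ω_q] = σ_{pq}(Ω_p − Ω_q) and σ Ω_p σ^{−1} = Ω_{σ(p)}, so this gives a well-defined H_N-module structure. -/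
set_option maxHeartbeats 1000000
open scoped TensorProduct
open scoped Classical

/-- The vector space `(ℂ^m)^{⊗N}`, realized as functions on the standard basis
indexed by `Fin N → Fin m`. -/
abbrev TensorPow (m N : ℕ) := (Fin N → Fin m) → ℂ

/-- The operator permuting the `N` tensor factors of `(ℂ^m)^{⊗N}` by `σ`. -/
noncomputable def permOp {m N : ℕ} (σ : Equiv.Perm (Fin N)) :
    Module.End ℂ (TensorPow m N) where
  toFun f := fun g => f (g ∘ σ)
  map_add' _ _ := rfl
  map_smul' _ _ := rfl

/-- The operator `E_{ab}^{(p)}`, acting as the matrix unit `E_{ab}` in the `p`-th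
tensor factor of `(ℂ^m)^{⊗N}` and identically elsewhere. -/
noncomputable def matUnitOp {m N : ℕ} (p : Fin N) (a b : Fin m) :
    Module.End ℂ (TensorPow m N) where
  toFun f := fun g => if g p = a then f (Function.update g p b) else 0
  map_add' _ _ := by funext g; by_cases h : g p = a <;> simp [h]
  map_smul' _ _ := by funext g; by_cases h : g p = a <;> simp [h]

variable {m N : ℕ} {U : Type*} [AddCommGroup U] [Module ℂ U]

/-- The permutation operator on `(ℂ^m)^{⊗N} ⊗ U`. -/
noncomputable def permT (σ : Equiv.Perm (Fin N)) :
    Module.End ℂ (TensorPow m N ⊗[ℂ] U) :=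
  TensorProduct.map (permOp σ) LinearMap.id

/-- Given a representation `ρ` of `gl_m` on `U`, the operator
`Ω_p = Σ_{a,b} E_{ab}^{(p)} ⊗ E_{ba}` on `(ℂ^m)^{⊗N} ⊗ U`. -/
noncomputable def omegaOp (ρ : Matrix (Fin m) (Fin m) ℂ →ₗ[ℂ] Module.End ℂ U)
    (p : Fin N) : Module.End ℂ (TensorPow m N ⊗[ℂ] U) :=
  ∑ a : Fin m, ∑ b : Fin m,
    TensorProduct.map (matUnitOp p a b) (ρ (Matrix.single b a 1))

section Helpers

variable {m N : ℕ} {U : Type*} [AddCommGroup U] [Module ℂ U]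

lemma matUnitOp_apply (p : Fin N) (a b : Fin m) (f : TensorPow m N) (g : Fin N → Fin m) :
    matUnitOp p a b f g = if g p = a then f (Function.update g p b) else 0 := rfl

lemma permOp_apply (σ : Equiv.Perm (Fin N)) (f : TensorPow m N) (g : Fin N → Fin m) :
    permOp σ f g = f (g ∘ σ) := rfl

lemma matUnitOp_mul_same (p : Fin N) (a b c d : Fin m) :
    matUnitOp (m := m) (N := N) p a b * matUnitOp p c d
      = if b = c then matUnitOp p a d else 0 := by
  apply LinearMap.ext; intro f; funext g
  by_cases h1 : g p = a <;> by_cases h2 : b = c <;>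
    simp [Module.End.mul_apply, matUnitOp_apply, h1, h2, Function.update_idem]

lemma matUnitOp_comm {p q : Fin N} (h : p ≠ q) (a b c d : Fin m) :
    matUnitOp (m := m) (N := N) p a b * matUnitOp q c d
      = matUnitOp q c d * matUnitOp p a b := by
  apply LinearMap.ext; intro f; funext g
  have hp : Function.update g q d p = g p := Function.update_of_ne h _ _
  have hq : Function.update g p b q = g q := Function.update_of_ne (Ne.symm h) _ _
  by_cases h1 : g p = a <;> by_cases h2 : g q = c <;>
    simp [Module.End.mul_apply, matUnitOp_apply, hp, hq, h1, h2,
      Function.update_comm h]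

lemma permOp_mul (σ τ : Equiv.Perm (Fin N)) :
    permOp (m := m) σ * permOp τ = permOp (σ * τ) := by
  apply LinearMap.ext; intro f; funext g
  rfl

lemma permOp_one : permOp (m := m) (N := N) 1 = 1 := by
  apply LinearMap.ext; intro f; funext g
  rfl

lemma permOp_mul_matUnitOp (σ : Equiv.Perm (Fin N)) (p : Fin N) (a b : Fin m) :
    permOp (m := m) σ * matUnitOp p a b = matUnitOp (σ p) a b * permOp σ := by
  apply LinearMap.ext; intro f; funext g
  have key : Function.update (g ∘ σ) p b = (Function.update g (σ p) b) ∘ σ := by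
    funext x
    simp [Function.update_apply, Function.comp_apply, EmbeddingLike.apply_eq_iff_eq]
  simp [Module.End.mul_apply, matUnitOp_apply, permOp_apply, Function.comp_apply, key]

lemma permOp_swap {p q : Fin N} (h : p ≠ q) :
    permOp (m := m) (Equiv.swap p q)
      = ∑ c : Fin m, ∑ d : Fin m, matUnitOp p c d * matUnitOp q d c := by
  apply LinearMap.ext; intro f; funext g
  have hgq : ∀ d : Fin m, Function.update g p d q = g q :=
    fun d => Function.update_of_ne (Ne.symm h) _ _
  simp only [LinearMap.sum_apply, Finset.sum_apply, Module.End.mul_apply, matUnitOp_apply, hgq]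
  rw [Finset.sum_eq_single (g p)]
  · rw [Finset.sum_eq_single (g q)]
    · have harg : g ∘ (Equiv.swap p q)
          = Function.update (Function.update g p (g q)) q (g p) := by
        funext x
        by_cases hx1 : x = p
        · subst hx1
          simp [Function.update_apply, h, Equiv.swap_apply_left]
        · by_cases hx2 : x = q
          · subst hx2
            simp [Function.update_apply, Equiv.swap_apply_right]
          · simp [Function.update_apply, hx1, hx2, Equiv.swap_apply_of_ne_of_ne hx1 hx2]
      simp [permOp_apply, harg]
    · intro d _ hd
      simp [Ne.symm hd]
    · simp
  · intro c _ hc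
    simp [Ne.symm hc]
  · simp

lemma map_sum_left {ι : Type*} (s : Finset ι) (A : ι → Module.End ℂ (TensorPow m N))
    (B : Module.End ℂ U) :
    TensorProduct.map (∑ i ∈ s, A i) B = ∑ i ∈ s, TensorProduct.map (A i) B := by
  classical
  induction s using Finset.cons_induction with
  | empty => simp [TensorProduct.map_zero_left]
  | cons i s hi ih => rw [Finset.sum_cons, Finset.sum_cons, TensorProduct.map_add_left, ih]

lemma map_sub_right (A : Module.End ℂ (TensorPow m N)) (B C : Module.End ℂ U) :
    TensorProduct.map A (B - C) = TensorProduct.map A B - TensorProduct.map A C := by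
  apply TensorProduct.ext'
  intro x u
  simp [TensorProduct.map_tmul, TensorProduct.tmul_sub]

lemma map_ite_right (A : Module.End ℂ (TensorPow m N)) (P : Prop) [Decidable P]
    (X : Module.End ℂ U) :
    TensorProduct.map A (if P then X else 0) = if P then TensorProduct.map A X else 0 := by
  split <;> simp [TensorProduct.map_zero_right]

lemma map_ite_left (A B : Module.End ℂ (TensorPow m N)) (P : Prop) [Decidable P]
    (X : Module.End ℂ U) :
    TensorProduct.map (if P then A else 0) X = if P then TensorProduct.map A X else 0 := by
  split <;> simp [TensorProduct.map_zero_left]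

lemma std_mul (a b c d : Fin m) :
    (Matrix.single b a 1 : Matrix (Fin m) (Fin m) ℂ) * Matrix.single d c 1
      = if a = d then Matrix.single b c 1 else 0 := by
  by_cases h : a = d
  · subst h; simp
  · simp [Matrix.single_mul_single_of_ne, h]

lemma sum4_swap {β : Type*} [AddCommMonoid β] (F : Fin m → Fin m → Fin m → Fin m → β) :
    (∑ a : Fin m, ∑ b : Fin m, ∑ c : Fin m, ∑ d : Fin m, F a b c d)
      = ∑ a : Fin m, ∑ b : Fin m, ∑ c : Fin m, ∑ d : Fin m, F c d a b := by
  rw [show (∑ a : Fin m, ∑ b : Fin m, ∑ c : Fin m, ∑ d : Fin m, F a b c d)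
      = ∑ x : (Fin m × Fin m) × Fin m × Fin m, F x.1.1 x.1.2 x.2.1 x.2.2 by
    simp [Fintype.sum_prod_type]]
  rw [show (∑ a : Fin m, ∑ b : Fin m, ∑ c : Fin m, ∑ d : Fin m, F c d a b)
      = ∑ x : (Fin m × Fin m) × Fin m × Fin m, F x.2.1 x.2.2 x.1.1 x.1.2 by
    simp [Fintype.sum_prod_type]]
  exact Fintype.sum_equiv (Equiv.prodComm _ _) _ _ (fun x => rfl)

lemma sum3_swap {β : Type*} [AddCommMonoid β] (F : Fin m → Fin m → Fin m → β) :
    (∑ a : Fin m, ∑ b : Fin m, ∑ c : Fin m, F a b c)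
      = ∑ a : Fin m, ∑ b : Fin m, ∑ c : Fin m, F c b a := by
  rw [show (∑ a : Fin m, ∑ b : Fin m, ∑ c : Fin m, F a b c)
      = ∑ x : Fin m × Fin m × Fin m, F x.1 x.2.1 x.2.2 by
    simp [Fintype.sum_prod_type]]
  rw [show (∑ a : Fin m, ∑ b : Fin m, ∑ c : Fin m, F c b a)
      = ∑ x : Fin m × Fin m × Fin m, F x.2.2 x.2.1 x.1 by
    simp [Fintype.sum_prod_type]]
  exact Fintype.sum_equiv
    ⟨fun x => (x.2.2, x.2.1, x.1), fun x => (x.2.2, x.2.1, x.1),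
      fun x => rfl, fun x => rfl⟩ _ _ (fun x => rfl)


lemma map_neg_right (A : Module.End ℂ (TensorPow m N)) (B : Module.End ℂ U) :
    TensorProduct.map A (-B) = -TensorProduct.map A B := by
  apply TensorProduct.ext'
  intro x u
  simp [TensorProduct.map_tmul, TensorProduct.tmul_neg]

lemma my_sum_sub {ι : Type*} (s : Finset ι)
    (f g : ι → Module.End ℂ (TensorPow m N ⊗[ℂ] U)) :
    (∑ i ∈ s, f i) - ∑ i ∈ s, g i = ∑ i ∈ s, (f i - g i) := by
  apply LinearMap.ext; intro x
  simp [LinearMap.sub_apply, LinearMap.sum_apply, Finset.sum_sub_distrib]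

lemma my_sum_ite_eq (b : Fin m) (f : Fin m → Module.End ℂ (TensorPow m N ⊗[ℂ] U)) :
    (∑ a : Fin m, if b = a then f a else 0) = f b := by
  rw [Finset.sum_eq_single b]
  · rw [if_pos rfl]
  · intro c _ hc
    rw [if_neg (Ne.symm hc)]
  · intro hb; exact absurd (Finset.mem_univ _) hb

lemma my_sum_ite_eq' (b : Fin m) (f : Fin m → Module.End ℂ (TensorPow m N ⊗[ℂ] U)) :
    (∑ a : Fin m, if a = b then f a else 0) = f b := by
  rw [Finset.sum_eq_single b]
  · rw [if_pos rfl]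
  · intro c _ hc
    rw [if_neg hc]
  · intro hb; exact absurd (Finset.mem_univ _) hb

lemma my_sum_ite_irrel (P : Prop) [Decidable P]
    (f : Fin m → Module.End ℂ (TensorPow m N ⊗[ℂ] U)) :
    (∑ a : Fin m, if P then f a else 0) = if P then ∑ a : Fin m, f a else 0 := by
  split
  · rfl
  · exact Finset.sum_const_zero

lemma map_ite_mul (P : Prop) [Decidable P] (A B : Module.End ℂ (TensorPow m N))
    (X : Module.End ℂ U) :
    TensorProduct.map ((if P then A else 0) * B) X
      = if P then TensorProduct.map (A * B) X else 0 := by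
  split
  · rfl
  · rw [zero_mul, TensorProduct.map_zero_left]

lemma map_mul_ite (P : Prop) [Decidable P] (A B : Module.End ℂ (TensorPow m N))
    (X : Module.End ℂ U) :
    TensorProduct.map (A * (if P then B else 0)) X
      = if P then TensorProduct.map (A * B) X else 0 := by
  split
  · rfl
  · rw [mul_zero, TensorProduct.map_zero_left]

lemma endT_sub_zero (Z : Module.End ℂ (TensorPow m N ⊗[ℂ] U)) : Z - 0 = Z := by
  apply LinearMap.ext; intro x
  simp [LinearMap.sub_apply]

lemma endT_zero_sub (Z : Module.End ℂ (TensorPow m N ⊗[ℂ] U)) : 0 - Z = -Z := by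
  apply LinearMap.ext; intro x
  simp [LinearMap.sub_apply]

lemma endT_mul_sub (A B C : Module.End ℂ (TensorPow m N ⊗[ℂ] U)) :
    A * (B - C) = A * B - A * C := by
  apply LinearMap.ext; intro x
  simp [Module.End.mul_apply, LinearMap.sub_apply]

lemma map_rho_ite_sub (A : Module.End ℂ (TensorPow m N))
    (ρ : Matrix (Fin m) (Fin m) ℂ →ₗ[ℂ] Module.End ℂ U)
    (P Q : Prop) [Decidable P] [Decidable Q] (X Y : Matrix (Fin m) (Fin m) ℂ) :
    TensorProduct.map A (ρ ((if P then X else 0) - (if Q then Y else 0)))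
      = (if P then TensorProduct.map A (ρ X) else 0)
        - (if Q then TensorProduct.map A (ρ Y) else 0) := by
  split_ifs with h1 h2 h2
  · rw [map_sub ρ, map_sub_right]
  · rw [sub_zero, endT_sub_zero]
  · rw [zero_sub, endT_zero_sub, map_neg ρ, map_neg_right]
  · rw [sub_zero, map_zero ρ, TensorProduct.map_zero_right, endT_sub_zero]


end Helpers
/-- For a `gl_m`-module `U`, the operators `Ω_p = Σ_{a,b} E_{ab}^{(p)} ⊗ E_{ba}` on
`(ℂ^m)^{⊗N} ⊗ U` satisfy `[Ω_p, Ω_q] = σ_{pq}(Ω_p − Ω_q)` and `σ Ω_p σ⁻¹ = Ω_{σ(p)}`,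
so together with the permutation action of `S_N` they define an `H_N`-module structure. -/
theorem stmt4 (m N : ℕ) (U : Type*) [AddCommGroup U] [Module ℂ U]
    (ρ : Matrix (Fin m) (Fin m) ℂ →ₗ[ℂ] Module.End ℂ U)
    (hρ : ∀ X Y : Matrix (Fin m) (Fin m) ℂ,
      ρ (X * Y - Y * X) = ρ X * ρ Y - ρ Y * ρ X) :
    (∀ p q : Fin N,
      omegaOp ρ p * omegaOp ρ q - omegaOp ρ q * omegaOp ρ p =
        permT (m := m) (Equiv.swap p q) * (omegaOp ρ p - omegaOp ρ q)) ∧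
    (∀ (σ : Equiv.Perm (Fin N)) (p : Fin N),
      permT (m := m) σ * omegaOp ρ p * permT (m := m) σ⁻¹ = omegaOp ρ (σ p)) := by
  have key : ∀ r₁ r₂ : Fin N, omegaOp ρ r₁ * omegaOp ρ r₂ =
      ∑ a : Fin m, ∑ b : Fin m, ∑ c : Fin m, ∑ d : Fin m,
        TensorProduct.map (matUnitOp r₁ a b * matUnitOp r₂ c d)
          (ρ (Matrix.single b a 1) * ρ (Matrix.single d c 1)) := by
    intro r₁ r₂
    simp only [omegaOp, Finset.mul_sum, Finset.sum_mul, ← TensorProduct.map_mul]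
    exact sum4_swap _
  constructor
  · intro p q
    by_cases hpq : p = q
    · subst hpq
      rw [sub_self (omegaOp ρ p * omegaOp ρ p), sub_self (omegaOp ρ p), mul_zero]
    -- LHS computation
    have h2 : omegaOp ρ q * omegaOp ρ p =
        ∑ a : Fin m, ∑ b : Fin m, ∑ c : Fin m, ∑ d : Fin m,
          TensorProduct.map (matUnitOp p a b * matUnitOp q c d)
            (ρ (Matrix.single d c 1) * ρ (Matrix.single b a 1)) := by
      rw [key q p, sum4_swap]
      simp only [← matUnitOp_comm hpq]
    have hL : omegaOp ρ p * omegaOp ρ q - omegaOp ρ q * omegaOp ρ p =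
        (∑ a : Fin m, ∑ b : Fin m, ∑ c : Fin m,
          TensorProduct.map (matUnitOp p a b * matUnitOp q c a)
            (ρ (Matrix.single b c 1)))
        - ∑ a : Fin m, ∑ b : Fin m, ∑ d : Fin m,
          TensorProduct.map (matUnitOp p a b * matUnitOp q b d)
            (ρ (Matrix.single d a 1)) := by
      rw [key p q, h2]
      simp only [my_sum_sub]
      simp only [← map_sub_right]
      simp only [← hρ, std_mul]
      simp only [map_rho_ite_sub]
      simp only [← my_sum_sub]
      simp only [my_sum_ite_irrel, my_sum_ite_eq, my_sum_ite_eq']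
    -- RHS computation
    have hswap : permT (m := m) (U := U) (Equiv.swap p q)
        = ∑ c : Fin m, ∑ d : Fin m,
            TensorProduct.map (matUnitOp p c d * matUnitOp q d c) 1 := by
      unfold permT
      rw [show (LinearMap.id : U →ₗ[ℂ] U) = 1 from rfl, permOp_swap hpq]
      simp only [map_sum_left]
    have hP1 : permT (m := m) (U := U) (Equiv.swap p q) * omegaOp ρ p =
        ∑ a : Fin m, ∑ b : Fin m, ∑ c : Fin m,
          TensorProduct.map (matUnitOp p a b * matUnitOp q c a)
            (ρ (Matrix.single b c 1)) := by
      rw [hswap]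
      unfold omegaOp
      simp only [Finset.sum_mul, Finset.mul_sum, ← TensorProduct.map_mul, one_mul]
      simp only [mul_assoc, matUnitOp_comm (Ne.symm hpq)]
      simp only [← mul_assoc, matUnitOp_mul_same, map_ite_mul]
      simp only [my_sum_ite_irrel, my_sum_ite_eq, my_sum_ite_eq']
      exact sum3_swap _
    have hP2 : permT (m := m) (U := U) (Equiv.swap p q) * omegaOp ρ q =
        ∑ a : Fin m, ∑ b : Fin m, ∑ d : Fin m,
          TensorProduct.map (matUnitOp p a b * matUnitOp q b d)
            (ρ (Matrix.single d a 1)) := by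
      rw [hswap]
      unfold omegaOp
      simp only [Finset.sum_mul, Finset.mul_sum, ← TensorProduct.map_mul, one_mul]
      simp only [mul_assoc, matUnitOp_mul_same, map_mul_ite]
      simp only [my_sum_ite_irrel, my_sum_ite_eq, my_sum_ite_eq']
      exact Finset.sum_congr rfl fun a _ => Finset.sum_comm
    have hR : permT (m := m) (U := U) (Equiv.swap p q) * (omegaOp ρ p - omegaOp ρ q)
        = permT (m := m) (U := U) (Equiv.swap p q) * omegaOp ρ p
          - permT (m := m) (U := U) (Equiv.swap p q) * omegaOp ρ q :=
      endT_mul_sub _ _ _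
    rw [hL, hR, hP1, hP2]
  · intro σ p
    have hcomm2 : permT (m := m) (U := U) σ * omegaOp ρ p = omegaOp ρ (σ p) * permT σ := by
      unfold permT omegaOp
      rw [show (LinearMap.id : U →ₗ[ℂ] U) = 1 from rfl]
      simp only [Finset.mul_sum, Finset.sum_mul]
      refine Finset.sum_congr rfl fun a _ => Finset.sum_congr rfl fun b _ => ?_
      rw [← TensorProduct.map_mul, ← TensorProduct.map_mul, one_mul, mul_one,
        permOp_mul_matUnitOp]
    have hinv : permT (m := m) (U := U) σ * permT σ⁻¹ = 1 := by
      unfold permT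
      rw [show (LinearMap.id : U →ₗ[ℂ] U) = 1 from rfl, ← TensorProduct.map_mul,
        permOp_mul, one_mul, mul_inv_cancel, permOp_one, TensorProduct.map_one]
    rw [hcomm2, mul_assoc, hinv, mul_one]
end

section
/- For any complex numbers and integers h ≤ ν, the hypergeometric summation identity Σ_{n=h}^{ν} [(−1)^{n−h} n! (ν−h)! / (h! (n−h)! (ν−n)!)] ∏_{s=0}^{n−h−1} 1/(w+s) = ∏_{s=0}^{ν−h−1} (w−h+s−1)/(w+s) holds as an equality of rational functions in the variable w. -/
open scoped Classical

section GaussAux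
open Finset

lemma fact_prod (h : ℕ) : ∀ k : ℕ, (h + k).factorial = h.factorial * ∏ i ∈ range k, (h + 1 + i)
  | 0 => by simp
  | (k+1) => by
      rw [prod_range_succ, ← mul_assoc, ← fact_prod h k, ← Nat.add_assoc, Nat.factorial_succ]
      ring

lemma key {K : Type*} [Field K] (b : K) :
    ∀ (m : ℕ) (t : K), (∀ s : ℕ, s < m → t + s ≠ 0) →
    ∑ k ∈ range (m+1), (-1:K)^k * (m.choose k) *
        (∏ i ∈ range k, (b + i)) / ∏ i ∈ range k, (t + i)
      = ∏ s ∈ range m, (t - b + s)/(t + s) := by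
  intro m
  induction m with
  | zero => intro t ht; simp
  | succ m ih =>
    intro t ht
    have ht' : ∀ s : ℕ, s ≤ m → t + s ≠ 0 := fun s hs => ht s (by omega)
    have ht0 : t ≠ 0 := by simpa using ht' 0 (by omega)
    have hB : ∀ j : ℕ, (∏ i ∈ range j, (t + i)) ≠ 0 → True := fun _ _ => trivial
    have hBne : ∀ j : ℕ, j ≤ m → (∏ i ∈ range j, (t + i)) ≠ 0 := by
      intro j hj
      exact prod_ne_zero_iff.2 (fun i hi => ht' i (by simp at hi; omega))
    -- step 1 : rearrange using Pascal
    have step1 :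
        ∑ k ∈ range (m+1+1), (-1:K)^k * ((m+1).choose k) *
            (∏ i ∈ range k, (b + i)) / ∏ i ∈ range k, (t + i)
        = ∑ j ∈ range (m+1), ((-1:K)^j * (m.choose j) *
            (∏ i ∈ range j, (b + i)) / ∏ i ∈ range j, (t + i)
          - (-1:K)^j * (m.choose j) *
            (∏ i ∈ range (j+1), (b + i)) / ∏ i ∈ range (j+1), (t + i)) := by
      rw [Finset.sum_range_succ', Finset.sum_sub_distrib]
      have e1 : ∀ j ∈ range (m+1),
          (-1:K)^(j+1) * ((m+1).choose (j+1)) *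
            (∏ i ∈ range (j+1), (b + i)) / ∏ i ∈ range (j+1), (t + i)
          = (-1:K)^(j+1) * ((m).choose (j+1)) *
              (∏ i ∈ range (j+1), (b + i)) / ∏ i ∈ range (j+1), (t + i)
            - (-1:K)^j * ((m).choose j) *
              (∏ i ∈ range (j+1), (b + i)) / ∏ i ∈ range (j+1), (t + i) := by
        intro j _
        rw [Nat.choose_succ_succ]
        push_cast
        ring
      rw [Finset.sum_congr rfl e1, Finset.sum_sub_distrib]
      have e2 : ∑ j ∈ range (m+1), (-1:K)^(j+1) * ((m).choose (j+1)) *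
            (∏ i ∈ range (j+1), (b + i)) / ∏ i ∈ range (j+1), (t + i)
          = ∑ j ∈ range (m+1), (-1:K)^j * ((m).choose j) *
            (∏ i ∈ range j, (b + i)) / ∏ i ∈ range j, (t + i)
            - 1 := by
        rw [Finset.sum_range_succ (fun j => (-1:K)^(j+1) * ((m).choose (j+1)) *
            (∏ i ∈ range (j+1), (b + i)) / ∏ i ∈ range (j+1), (t + i))]
        rw [Finset.sum_range_succ' (fun j => (-1:K)^j * ((m).choose j) *
            (∏ i ∈ range j, (b + i)) / ∏ i ∈ range j, (t + i))]
        simp [Nat.choose_succ_self]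
      rw [e2]
      simp
      ring
    rw [step1]
    -- step 2 : per-term simplification
    have step2 : ∀ j ∈ range (m+1),
        ((-1:K)^j * (m.choose j) *
            (∏ i ∈ range j, (b + i)) / ∏ i ∈ range j, (t + i)
          - (-1:K)^j * (m.choose j) *
            (∏ i ∈ range (j+1), (b + i)) / ∏ i ∈ range (j+1), (t + i))
        = (t - b)/t * ((-1:K)^j * (m.choose j) *
            (∏ i ∈ range j, (b + i)) / ∏ i ∈ range j, (t + 1 + i)) := by
      intro j hj
      simp only [mem_range] at hj
      have hj' : j ≤ m := by omega
      have hBj : (∏ i ∈ range j, (t + i)) ≠ 0 := hBne j hj'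
      have hBj' : (∏ i ∈ range j, (t + 1 + i)) ≠ 0 := by
        refine prod_ne_zero_iff.2 (fun i hi => ?_)
        have := ht (i+1) (by simp at hi; omega)
        push_cast at this ⊢
        intro hcon; apply this; rw [← hcon]; ring
      have htj : t + j ≠ 0 := ht j (by omega)
      have hshift : (∏ i ∈ range j, (t + i)) * (t + j) = t * ∏ i ∈ range j, (t + 1 + i) := by
        rw [← prod_range_succ (fun i => t + i) j]
        rw [prod_range_succ' (fun i => t + i) j]
        push_cast
        rw [mul_comm]
        congr 1
        · norm_num
        · apply prod_congr rfl; intro i _; push_cast; ring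
      have e3 : (-1:K)^j * (m.choose j) *
            (∏ i ∈ range j, (b + i)) / ∏ i ∈ range j, (t + i)
          - (-1:K)^j * (m.choose j) *
            (∏ i ∈ range (j+1), (b + i)) / ∏ i ∈ range (j+1), (t + i)
          = (-1:K)^j * (m.choose j) * (t - b) * (∏ i ∈ range j, (b + i)) /
              ((∏ i ∈ range j, (t + i)) * (t + j)) := by
        rw [prod_range_succ (fun i => b + i) j, prod_range_succ (fun i => t + i) j]
        field_simp
        ring
      rw [e3, hshift]
      field_simp
    rw [Finset.sum_congr rfl step2, ← Finset.mul_sum]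
    have ihap := ih (t+1) (fun s hs => by
      have := ht (s+1) (by omega); push_cast at this ⊢; intro hcon; apply this; rw [← hcon]; ring)
    rw [ihap]
    rw [Finset.prod_range_succ' (fun s => (t - b + s)/(t + s))]
    push_cast
    rw [mul_comm]
    congr 1
    · apply prod_congr rfl; intro i _; push_cast; ring_nf
    · simp

/-- The Gauss-summation identity: for nonnegative integers `h ≤ ν`, as an equality of
rational functions in the variable `w`,
`Σ_{n=h}^{ν} (−1)^{n−h} n! (ν−h)! / (h! (n−h)! (ν−n)!) ∏_{s=0}^{n−h−1} 1/(w+s)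
  = ∏_{s=0}^{ν−h−1} (w−h+s−1)/(w+s)`
(empty products being `1`).  We work in the field `RatFunc ℂ` of rational functions
over `ℂ`, with `w = X`. -/
theorem stmt12 (h ν : ℕ) (hh : h ≤ ν) :
    ∑ n ∈ Finset.Icc h ν,
      ((-1 : RatFunc ℂ) ^ (n - h) * ((Nat.factorial n : ℕ) : RatFunc ℂ) * ((Nat.factorial (ν - h) : ℕ) : RatFunc ℂ)) /
          (((Nat.factorial h : ℕ) : RatFunc ℂ) * ((Nat.factorial (n - h) : ℕ) : RatFunc ℂ) * ((Nat.factorial (ν - n) : ℕ) : RatFunc ℂ)) *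
        ∏ s ∈ Finset.range (n - h), (RatFunc.X + (s : RatFunc ℂ))⁻¹
    = ∏ s ∈ Finset.range (ν - h),
        (RatFunc.X - (h : RatFunc ℂ) + (s : RatFunc ℂ) - 1) / (RatFunc.X + (s : RatFunc ℂ)) := by
  set K := RatFunc ℂ
  haveI : CharZero K := charZero_of_injective_algebraMap (RatFunc.algebraMap_injective ℂ)
  have hX : ∀ s : ℕ, (RatFunc.X : K) + (s : K) ≠ 0 := by
    intro s
    have e : (RatFunc.X : K) + (s : K)
        = algebraMap (Polynomial ℂ) K (Polynomial.X + Polynomial.C (s : ℂ)) := by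
      rw [map_add, RatFunc.algebraMap_X]
      simp
    rw [e]
    exact RatFunc.algebraMap_ne_zero (Polynomial.X_add_C_ne_zero _)
  set m := ν - h with hm
  have hkey := key ((h : K) + 1) m RatFunc.X (fun s _ => hX s)
  have hmap : Finset.Icc h ν
      = Finset.map ⟨fun k => h + k, add_right_injective h⟩ (range (m + 1)) := by
    ext x
    simp only [Finset.mem_Icc, Finset.mem_map, Finset.mem_range,
      Function.Embedding.coeFn_mk]
    constructor
    · intro hx; exact ⟨x - h, by omega, by omega⟩
    · rintro ⟨a, ha, rfl⟩; omega
  rw [hmap, Finset.sum_map]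
  simp only [Function.Embedding.coeFn_mk, Nat.add_sub_cancel_left]
  have e : ∑ k ∈ range (m+1),
        ((-1:K)^k * ((h+k).factorial : K) * (m.factorial : K)) /
          ((h.factorial : K) * (k.factorial : K) * ((ν - (h+k)).factorial : K)) *
          ∏ s ∈ range k, ((RatFunc.X : K) + s)⁻¹
      = ∑ k ∈ range (m+1), (-1:K)^k * (m.choose k) *
          (∏ i ∈ range k, ((h : K) + 1 + i)) / ∏ i ∈ range k, ((RatFunc.X : K) + i) := by
    apply Finset.sum_congr rfl
    intro k hk
    simp only [mem_range] at hk
    have hk' : k ≤ m := by omega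
    have hν : ν - (h + k) = m - k := by omega
    rw [hν]
    have hcast : ((h + k).factorial : K)
        = (h.factorial : K) * ∏ i ∈ range k, ((h : K) + 1 + i) := by
      rw [fact_prod h k, Nat.cast_mul, Nat.cast_prod]
      push_cast
      ring
    have hch : (m.factorial : K) = (m.choose k : K) * (k.factorial : K) * ((m-k).factorial : K) := by
      rw [← Nat.cast_mul, ← Nat.cast_mul, Nat.choose_mul_factorial_mul_factorial hk']
    have hP : (∏ i ∈ range k, ((RatFunc.X : K) + i)) ≠ 0 :=
      prod_ne_zero_iff.2 fun i _ => hX i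
    have hf1 : (h.factorial : K) ≠ 0 := Nat.cast_ne_zero.2 (Nat.factorial_ne_zero _)
    have hf2 : (k.factorial : K) ≠ 0 := Nat.cast_ne_zero.2 (Nat.factorial_ne_zero _)
    have hf3 : ((m-k).factorial : K) ≠ 0 := Nat.cast_ne_zero.2 (Nat.factorial_ne_zero _)
    rw [hcast, hch, Finset.prod_inv_distrib]
    field_simp
    rw [mul_one_div, div_left_inj' hP, div_eq_iff (mul_ne_zero (mul_ne_zero hf1 hf2) hf3)]
    ring
  rw [e, hkey]
  exact Finset.prod_congr rfl fun s _ => by ring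

end GaussAux
end
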